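/- Let a and n be positive integers with n ≥ ⌈log₂ a⌉ + 1, and suppose f(n,a) < f(n+1,a). Then every union-closed family F of subsets of [n+1] in which every element lies in at most a sets and with |F| = f(n+1,a) (i.e., every optimal family for f(n+1,a)) has the property that every element e ∈ [n+1] is a twin difference of at least two pairs of sets, i.e., |{S ∈ F : e ∉ S and S ∪ {e} ∈ F}| ≥ 2. -/

import Mathlib

/-- A family of sets is union-closed if it contains the union of any two of its sets. -/
def UnionClosed (F : Finset (Finset ℕ)) : Prop :=
  ∀ S ∈ F, ∀ T ∈ F, S ∪ T ∈ F

/-- `F` is a family of subsets of `[n] = {0, …, n-1}` (modeled as `Finset.range n`). -/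
def FamilyOn (n : ℕ) (F : Finset (Finset ℕ)) : Prop :=
  ∀ S ∈ F, S ⊆ Finset.range n

/-- The degree of an element `e`: the number of sets of `F` containing `e`. -/
def degOf (F : Finset (Finset ℕ)) (e : ℕ) : ℕ :=
  (F.filter (fun S => e ∈ S)).card

/-- `franklF n a` is the maximum cardinality of a nonempty union-closed family of subsets
of `[n]` in which every element of `[n]` belongs to at most `a` sets. -/
noncomputable def franklF (n a : ℕ) : ℕ :=
  sSup {m | ∃ F : Finset (Finset ℕ), UnionClosed F ∧ FamilyOn n F ∧ F.Nonempty ∧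
    (∀ e ∈ Finset.range n, degOf F e ≤ a) ∧ F.card = m}

/-- `franklG n m` is the minimum, over union-closed families of subsets of `[n]` with
exactly `m` sets, of the maximum degree `max_{e ∈ [n]} |{S ∈ F : e ∈ S}|`. -/
noncomputable def franklG (n m : ℕ) : ℕ :=
  sInf {a | ∃ F : Finset (Finset ℕ), UnionClosed F ∧ FamilyOn n F ∧ F.card = m ∧
    (Finset.range n).sup (degOf F) = a}

/-- The number of twin pairs with twin difference `e`: sets `S ∈ F` with `e ∉ S`
and `S ∪ {e} ∈ F`. -/
def twinCount (F : Finset (Finset ℕ)) (e : ℕ) : ℕ :=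
  (F.filter (fun S => e ∉ S ∧ insert e S ∈ F)).card

/-- `e` is a non-trivial twin difference in `F` (as a family of subsets of `[n]`):
there is `S ∈ F` with `e ∉ S`, `S ∪ {e} ∈ F` and `S ∪ {e} ≠ [n]`. -/
def NonTrivialTwinDiff (n : ℕ) (F : Finset (Finset ℕ)) (e : ℕ) : Prop :=
  ∃ S ∈ F, e ∉ S ∧ insert e S ∈ F ∧ insert e S ≠ Finset.range n

/-- `franklFt n a`: maximum cardinality of a union-closed family of subsets of `[n]`
where every element of `[n]` lies in at most `a` sets and every element of `[n]` is a
non-trivial twin difference. -/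
noncomputable def franklFt (n a : ℕ) : ℕ :=
  sSup {m | ∃ F : Finset (Finset ℕ), UnionClosed F ∧ FamilyOn n F ∧
    (∀ e ∈ Finset.range n, degOf F e ≤ a) ∧
    (∀ e ∈ Finset.range n, NonTrivialTwinDiff n F e) ∧ F.card = m}

/-- `franklGt n m`: minimum of the maximum degree over union-closed families of subsets
of `[n]` with exactly `m` sets in which every element of `[n]` is a non-trivial twin
difference. -/
noncomputable def franklGt (n m : ℕ) : ℕ :=
  sInf {a | ∃ F : Finset (Finset ℕ), UnionClosed F ∧ FamilyOn n F ∧ F.card = m ∧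
    (∀ e ∈ Finset.range n, NonTrivialTwinDiff n F e) ∧
    (Finset.range n).sup (degOf F) = a}

section TwoTwinsHelpers

open Finset

private lemma franklF_bddAbove (n a : ℕ) : BddAbove {m | ∃ F : Finset (Finset ℕ),
    UnionClosed F ∧ FamilyOn n F ∧ F.Nonempty ∧
    (∀ e ∈ Finset.range n, degOf F e ≤ a) ∧ F.card = m} := by
  refine ⟨2 ^ n, ?_⟩
  rintro m ⟨F, _, hFam, _, _, rfl⟩
  have hsub : F ⊆ (Finset.range n).powerset := by
    intro S hS
    exact Finset.mem_powerset.2 (hFam S hS)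
  calc F.card ≤ (Finset.range n).powerset.card := Finset.card_le_card hsub
    _ = 2 ^ n := by rw [Finset.card_powerset, Finset.card_range]

private lemma le_franklF {n a : ℕ} {F : Finset (Finset ℕ)} (h1 : UnionClosed F)
    (h2 : FamilyOn n F) (h3 : F.Nonempty) (h4 : ∀ e ∈ Finset.range n, degOf F e ≤ a) :
    F.card ≤ franklF n a :=
  le_csSup (franklF_bddAbove n a) ⟨F, h1, h2, h3, h4, rfl⟩

/-- The core argument: a union-closed family on `[n+1]` beating `franklF n a` has
at least two twin pairs with difference `n`. -/
private lemma main_twin_lemma (a n : ℕ) (ha : 0 < a) (hn : 0 < n)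
    (hlog : Nat.clog 2 a + 1 ≤ n) (G : Finset (Finset ℕ)) (hUC : UnionClosed G)
    (hFam : FamilyOn (n + 1) G) (hdeg : ∀ x ∈ Finset.range (n + 1), degOf G x ≤ a)
    (hbig : franklF n a < G.card) (ht : twinCount G n ≤ 1) : False := by
  classical
  have hGne : G.Nonempty := Finset.card_pos.1 (by omega)
  set F' : Finset (Finset ℕ) := G.image (fun S => S.erase n) with hF'def
  -- F' is union-closed
  have hUC' : UnionClosed F' := by
    rintro A hA B hB
    obtain ⟨S, hS, rfl⟩ := Finset.mem_image.1 hA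
    obtain ⟨S', hS', rfl⟩ := Finset.mem_image.1 hB
    have : S.erase n ∪ S'.erase n = (S ∪ S').erase n := (Finset.erase_union_distrib S S' n).symm
    rw [this]
    exact Finset.mem_image_of_mem _ (hUC S hS S' hS')
  -- F' is a family on [n]
  have hFam' : FamilyOn n F' := by
    rintro A hA
    obtain ⟨S, hS, rfl⟩ := Finset.mem_image.1 hA
    intro x hx
    have hxS : x ∈ S := Finset.mem_of_mem_erase hx
    have hxn : x ≠ n := Finset.ne_of_mem_erase hx
    have := hFam S hS hxS
    rw [Finset.mem_range] at this ⊢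
    omega
  have hF'ne : F'.Nonempty := hGne.image _
  -- filters of F' are images of filters of G
  have hfilt : ∀ x : ℕ, x ≠ n →
      F'.filter (fun Y => x ∈ Y) = (G.filter (fun S => x ∈ S)).image (fun S => S.erase n) := by
    intro x hxn
    ext Y
    simp only [Finset.mem_filter, Finset.mem_image, hF'def]
    constructor
    · rintro ⟨⟨S, hS, rfl⟩, hxY⟩
      exact ⟨S, ⟨hS, Finset.mem_of_mem_erase hxY⟩, rfl⟩
    · rintro ⟨S, ⟨hS, hxS⟩, rfl⟩
      exact ⟨⟨S, hS, rfl⟩, Finset.mem_erase.2 ⟨hxn, hxS⟩⟩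
  -- degrees of F' are at most a
  have hdeg' : ∀ x ∈ Finset.range n, degOf F' x ≤ a := by
    intro x hx
    have hxn : x ≠ n := by have := Finset.mem_range.1 hx; omega
    have hxr : x ∈ Finset.range (n + 1) := by
      rw [Finset.mem_range] at hx ⊢; omega
    calc degOf F' x = ((G.filter (fun S => x ∈ S)).image (fun S => S.erase n)).card := by
          rw [degOf, hfilt x hxn]
      _ ≤ (G.filter (fun S => x ∈ S)).card := Finset.card_image_le
      _ ≤ a := hdeg x hxr
  have hF'le : F'.card ≤ franklF n a := le_franklF hUC' hFam' hF'ne hdeg'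
  -- counting: G.card ≤ F'.card + twinCount G n
  have hcount : G.card ≤ F'.card + twinCount G n := by
    set G₀ := G.filter (fun S => n ∉ S) with hG₀
    set G₁ := G.filter (fun S => n ∈ S) with hG₁
    set E := G₁.image (fun S => S.erase n) with hE
    have hsplit : G₁.card + G₀.card = G.card := by
      rw [hG₀, hG₁]
      exact Finset.card_filter_add_card_filter_not (p := fun S => n ∈ S)
    have hEcard : E.card = G₁.card := by
      rw [hE]
      apply Finset.card_image_of_injOn
      intro S hS S' hS' hEq
      have hnS : n ∈ S := (Finset.mem_filter.1 hS).2
      have hnS' : n ∈ S' := (Finset.mem_filter.1 hS').2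
      have hEq' : S.erase n = S'.erase n := hEq
      calc S = insert n (S.erase n) := (Finset.insert_erase hnS).symm
        _ = insert n (S'.erase n) := by rw [hEq']
        _ = S' := Finset.insert_erase hnS'
    have hsub : G₀ ∪ E ⊆ F' := by
      intro X hX
      rcases Finset.mem_union.1 hX with hX₀ | hXE
      · have h1 := Finset.mem_filter.1 hX₀
        have : X.erase n = X := Finset.erase_eq_of_notMem h1.2
        rw [hF'def]
        exact Finset.mem_image.2 ⟨X, h1.1, this⟩
      · rw [hF'def]
        obtain ⟨S, hS, rfl⟩ := Finset.mem_image.1 hXE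
        exact Finset.mem_image_of_mem _ (Finset.mem_filter.1 hS).1
    have hint : G₀ ∩ E ⊆ G.filter (fun S => n ∉ S ∧ insert n S ∈ G) := by
      intro X hX
      have hX₀ := Finset.mem_filter.1 (Finset.mem_of_mem_inter_left hX)
      have hXE := Finset.mem_of_mem_inter_right hX
      rw [hE] at hXE
      obtain ⟨S, hS, rfl⟩ := Finset.mem_image.1 hXE
      have hS' := Finset.mem_filter.1 hS
      have : insert n (S.erase n) = S := Finset.insert_erase hS'.2
      refine Finset.mem_filter.2 ⟨hX₀.1, hX₀.2, ?_⟩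
      rw [this]
      exact hS'.1
    calc G.card = G₁.card + G₀.card := hsplit.symm
      _ = G₀.card + E.card := by rw [hEcard]; omega
      _ = (G₀ ∪ E).card + (G₀ ∩ E).card := (Finset.card_union_add_card_inter G₀ E).symm
      _ ≤ F'.card + twinCount G n :=
          Nat.add_le_add (Finset.card_le_card hsub) (Finset.card_le_card hint)
  -- so twinCount G n = 1
  have ht1 : twinCount G n = 1 := by omega
  have hF'ge : franklF n a ≤ F'.card := by omega
  -- extract the unique twin T
  obtain ⟨T, hTeq⟩ := Finset.card_eq_one.1 ht1
  have hTmem : T ∈ G.filter (fun S => n ∉ S ∧ insert n S ∈ G) := by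
    rw [hTeq]; exact Finset.mem_singleton_self T
  have hTG : T ∈ G := (Finset.mem_filter.1 hTmem).1
  have hTn : n ∉ T := (Finset.mem_filter.1 hTmem).2.1
  have hTins : insert n T ∈ G := (Finset.mem_filter.1 hTmem).2.2
  have huniq : ∀ S ∈ G, n ∉ S → insert n S ∈ G → S = T := by
    intro S hS h1 h2
    have : S ∈ G.filter (fun S => n ∉ S ∧ insert n S ∈ G) := Finset.mem_filter.2 ⟨hS, h1, h2⟩
    rw [hTeq] at this
    exact Finset.mem_singleton.1 this
  -- key: every set of G avoiding n is contained in T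
  have hkey : ∀ S ∈ G, n ∉ S → S ⊆ T := by
    intro S hS hSn
    have h1 : S ∪ T ∈ G := hUC S hS T hTG
    have h2 : n ∉ S ∪ T := by
      rw [Finset.mem_union]; tauto
    have h3 : insert n (S ∪ T) ∈ G := by
      have h5 : S ∪ insert n T = insert n (S ∪ T) := by
        rw [Finset.union_insert]
      rw [← h5]
      exact hUC S hS _ hTins
    have h4 : S ∪ T = T := huniq _ h1 h2 h3
    calc S ⊆ S ∪ T := Finset.subset_union_left
      _ = T := h4
  -- strict degree bound for F'
  have hdeg'' : ∀ x ∈ Finset.range n, degOf F' x < a := by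
    intro x hx
    have hxlt : x < n := Finset.mem_range.1 hx
    have hxn : x ≠ n := by omega
    have hxr : x ∈ Finset.range (n + 1) := Finset.mem_range.2 (by omega)
    by_cases hxT : x ∈ T
    · -- collision of T and insert n T in the filter
      have hb : insert n T ∈ G.filter (fun S => x ∈ S) :=
        Finset.mem_filter.2 ⟨hTins, Finset.mem_insert_of_mem hxT⟩
      have himsub : (G.filter (fun S => x ∈ S)).image (fun S => S.erase n) ⊆
          ((G.filter (fun S => x ∈ S)).erase (insert n T)).image (fun S => S.erase n) := by
        intro Y hY
        obtain ⟨S, hS, rfl⟩ := Finset.mem_image.1 hY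
        by_cases hSe : S = insert n T
        · subst hSe
          have h1 : (insert n T).erase n = T := Finset.erase_insert hTn
          have h2 : T.erase n = T := Finset.erase_eq_of_notMem hTn
          have hTf : T ∈ (G.filter (fun S => x ∈ S)).erase (insert n T) := by
            refine Finset.mem_erase.2 ⟨?_, Finset.mem_filter.2 ⟨hTG, hxT⟩⟩
            intro hcontra
            rw [hcontra] at hTn
            exact hTn (Finset.mem_insert_self n T)
          exact Finset.mem_image.2 ⟨T, hTf, h2.trans h1.symm⟩
        · exact Finset.mem_image_of_mem _ (Finset.mem_erase.2 ⟨hSe, hS⟩)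
      calc degOf F' x
          = ((G.filter (fun S => x ∈ S)).image (fun S => S.erase n)).card := by
            rw [degOf, hfilt x hxn]
        _ ≤ (((G.filter (fun S => x ∈ S)).erase (insert n T)).image (fun S => S.erase n)).card :=
            Finset.card_le_card himsub
        _ ≤ ((G.filter (fun S => x ∈ S)).erase (insert n T)).card := Finset.card_image_le
        _ < (G.filter (fun S => x ∈ S)).card := Finset.card_erase_lt_of_mem hb
        _ ≤ a := hdeg x hxr
    · -- all x-sets contain n, and insert n T is not among them
      have hsubΦ : G.filter (fun S => x ∈ S) ⊆ (G.filter (fun S => n ∈ S)).erase (insert n T) := by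
        intro S hS
        have h1 := Finset.mem_filter.1 hS
        have hnS : n ∈ S := by
          by_contra hnS
          exact hxT (hkey S h1.1 hnS h1.2)
        refine Finset.mem_erase.2 ⟨?_, Finset.mem_filter.2 ⟨h1.1, hnS⟩⟩
        intro hcontra
        rw [hcontra] at h1
        rcases Finset.mem_insert.1 h1.2 with h | h
        · exact hxn h
        · exact hxT h
      have hbT : insert n T ∈ G.filter (fun S => n ∈ S) :=
        Finset.mem_filter.2 ⟨hTins, Finset.mem_insert_self n T⟩
      have hnr : n ∈ Finset.range (n + 1) := Finset.mem_range.2 (by omega)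
      calc degOf F' x
          = ((G.filter (fun S => x ∈ S)).image (fun S => S.erase n)).card := by
            rw [degOf, hfilt x hxn]
        _ ≤ (G.filter (fun S => x ∈ S)).card := Finset.card_image_le
        _ ≤ ((G.filter (fun S => n ∈ S)).erase (insert n T)).card := Finset.card_le_card hsubΦ
        _ < (G.filter (fun S => n ∈ S)).card := Finset.card_erase_lt_of_mem hbT
        _ ≤ a := hdeg n hnr
  -- adding any compatible set to F' is impossible
  have haddcontra : ∀ Y : Finset ℕ, Y ∉ F' → Y ⊆ Finset.range n →
      (∀ S ∈ F', S ∪ Y ∈ insert Y F') → False := by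
    intro Y hYF hYr hcl
    have hUC'' : UnionClosed (insert Y F') := by
      intro S hS S' hS'
      rcases Finset.mem_insert.1 hS with h1 | h1 <;>
        rcases Finset.mem_insert.1 hS' with h2 | h2
      · rw [h1, h2, Finset.union_self]; exact Finset.mem_insert_self _ _
      · rw [h1, Finset.union_comm]; exact hcl S' h2
      · rw [h2]; exact hcl S h1
      · exact Finset.mem_insert_of_mem (hUC' S h1 S' h2)
    have hFam'' : FamilyOn n (insert Y F') := by
      intro S hS
      rcases Finset.mem_insert.1 hS with rfl | hS
      · exact hYr
      · exact hFam' S hS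
    have hdeg''' : ∀ x ∈ Finset.range n, degOf (insert Y F') x ≤ a := by
      intro x hx
      have hsub : (insert Y F').filter (fun S => x ∈ S) ⊆
          insert Y (F'.filter (fun S => x ∈ S)) := by
        intro Z hZ
        have h1 := Finset.mem_filter.1 hZ
        rcases Finset.mem_insert.1 h1.1 with rfl | hZF
        · exact Finset.mem_insert_self _ _
        · exact Finset.mem_insert_of_mem (Finset.mem_filter.2 ⟨hZF, h1.2⟩)
      calc degOf (insert Y F') x ≤ (insert Y (F'.filter (fun S => x ∈ S))).card :=
            Finset.card_le_card hsub
        _ ≤ (F'.filter (fun S => x ∈ S)).card + 1 := Finset.card_insert_le _ _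
        _ ≤ a := by have := hdeg'' x hx; rw [degOf] at this; omega
    have hle := le_franklF hUC'' hFam'' ⟨Y, Finset.mem_insert_self _ _⟩ hdeg'''
    rw [Finset.card_insert_of_notMem hYF] at hle
    omega
  -- the top set of F'
  set M : Finset ℕ := F'.sup id with hMdef
  have hSM : ∀ S ∈ F', S ⊆ M := by
    intro S hS
    exact Finset.le_sup (f := id) hS
  have hMr : M ⊆ Finset.range n := Finset.sup_le (fun S hS => hFam' S hS)
  by_cases hmiss : ∃ Y ∈ M.powerset, Y ∉ F'
  · -- maximal missing subset of M can be added
    set D := M.powerset.filter (fun Y => Y ∉ F') with hD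
    have hDne : D.Nonempty := by
      obtain ⟨Y, h1, h2⟩ := hmiss
      exact ⟨Y, Finset.mem_filter.2 ⟨h1, h2⟩⟩
    obtain ⟨Y, hYD, hYmax⟩ := Finset.exists_max_image D Finset.card hDne
    have hYP := Finset.mem_filter.1 hYD
    have hYM : Y ⊆ M := Finset.mem_powerset.1 hYP.1
    refine haddcontra Y hYP.2 (hYM.trans hMr) ?_
    intro S hS
    by_cases hin : S ∪ Y ∈ F'
    · exact Finset.mem_insert_of_mem hin
    · have hDmem : S ∪ Y ∈ D := by
        refine Finset.mem_filter.2 ⟨Finset.mem_powerset.2 ?_, hin⟩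
        exact Finset.union_subset (hSM S hS) hYM
      have hcard := hYmax _ hDmem
      have : Y = S ∪ Y := Finset.eq_of_subset_of_card_le Finset.subset_union_right hcard
      rw [← this]
      exact Finset.mem_insert_self _ _
  · push_neg at hmiss
    by_cases hMfull : M = Finset.range n
    · -- F' is the full powerset of range n : degree 2^(n-1) contradicts
      have hF'eq : F' = (Finset.range n).powerset := by
        apply Finset.Subset.antisymm
        · intro S hS
          exact Finset.mem_powerset.2 (hFam' S hS)
        · intro Y hY
          apply hmiss
          rw [hMfull]
          exact hY
      have h0 : (0 : ℕ) ∈ Finset.range n := Finset.mem_range.2 hn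
      have hdeg0 : degOf F' 0 < a := hdeg'' 0 h0
      have hcount0 : degOf F' 0 = 2 ^ (n - 1) := by
        rw [degOf, hF'eq]
        have hbij : ((Finset.range n).powerset.filter (fun S => 0 ∈ S)).card =
            ((Finset.range n).erase 0).powerset.card := by
          apply Finset.card_bij (fun S _ => S.erase 0)
          · intro S hS
            have h1 := Finset.mem_filter.1 hS
            exact Finset.mem_powerset.2
              (Finset.erase_subset_erase 0 (Finset.mem_powerset.1 h1.1))
          · intro S hS S' hS' hEq
            have h1 := Finset.mem_filter.1 hS
            have h2 := Finset.mem_filter.1 hS'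
            calc S = insert 0 (S.erase 0) := (Finset.insert_erase h1.2).symm
              _ = insert 0 (S'.erase 0) := by rw [hEq]
              _ = S' := Finset.insert_erase h2.2
          · intro Z hZ
            have hZ' := Finset.mem_powerset.1 hZ
            have h0Z : 0 ∉ Z := fun h => (Finset.mem_erase.1 (hZ' h)).1 rfl
            refine ⟨insert 0 Z, ?_, Finset.erase_insert h0Z⟩
            refine Finset.mem_filter.2 ⟨Finset.mem_powerset.2 ?_, Finset.mem_insert_self _ _⟩
            apply Finset.insert_subset h0
            exact hZ'.trans (Finset.erase_subset 0 _)
        rw [hbij, Finset.card_powerset, Finset.card_erase_of_mem h0, Finset.card_range]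
      have hle2 : a ≤ 2 ^ (n - 1) := by
        calc a ≤ 2 ^ Nat.clog 2 a := Nat.le_pow_clog one_lt_two a
          _ ≤ 2 ^ (n - 1) := Nat.pow_le_pow_right (by norm_num) (by omega)
      omega
    · -- M misses some z of range n : add insert z M
      have hex : ∃ z ∈ Finset.range n, z ∉ M := by
        by_contra hc
        push_neg at hc
        exact hMfull (Finset.Subset.antisymm hMr hc)
      obtain ⟨z, hzr, hzM⟩ := hex
      have hYF : insert z M ∉ F' := by
        intro h
        exact hzM (hSM _ h (Finset.mem_insert_self z M))
      refine haddcontra (insert z M) hYF (Finset.insert_subset hzr hMr) ?_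
      intro S hS
      have : S ∪ insert z M = insert z M :=
        Finset.union_eq_right.2 ((hSM S hS).trans (Finset.subset_insert z M))
      rw [this]
      exact Finset.mem_insert_self _ _

end TwoTwinsHelpers
/-- If `f(n,a) < f(n+1,a)` (with `a, n` positive and `n ≥ ⌈log₂ a⌉ + 1`), then every
element of `[n+1]` is a twin difference of at least two pairs of sets in every optimal
family for `f(n+1,a)`. -/
theorem two_twins_of_f_increase (a n : ℕ) (ha : 0 < a) (hn : 0 < n)
    (hlog : Nat.clog 2 a + 1 ≤ n) (hlt : franklF n a < franklF (n + 1) a)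
    (F : Finset (Finset ℕ)) (hUC : UnionClosed F) (hFam : FamilyOn (n + 1) F)
    (hdeg : ∀ e ∈ Finset.range (n + 1), degOf F e ≤ a)
    (hopt : F.card = franklF (n + 1) a) :
    ∀ e ∈ Finset.range (n + 1), 2 ≤ twinCount F e := by
  classical
  intro e he
  by_contra hcon
  push_neg at hcon
  have ht : twinCount F e ≤ 1 := by omega
  have hen : e < n + 1 := Finset.mem_range.1 he
  set σ : Equiv.Perm ℕ := Equiv.swap e n with hσdef
  have hσσ : ∀ x : ℕ, σ (σ x) = x := fun x => Equiv.swap_apply_self e n x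
  have himg_inj : Function.Injective (fun S : Finset ℕ => S.image σ) :=
    Finset.image_injective σ.injective
  set G : Finset (Finset ℕ) := F.image (fun S => S.image σ) with hGdef
  have hGcard : G.card = F.card := Finset.card_image_of_injective F himg_inj
  have hmemG : ∀ S : Finset ℕ, S ∈ F ↔ S.image σ ∈ G := by
    intro S
    constructor
    · intro h; exact Finset.mem_image_of_mem _ h
    · intro h
      obtain ⟨S', hS', hEq⟩ := Finset.mem_image.1 h
      have : S' = S := himg_inj hEq
      rwa [← this]
  have hmem_image_iff : ∀ (S : Finset ℕ) (x : ℕ), x ∈ S.image σ ↔ σ x ∈ S := by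
    intro S x
    constructor
    · intro h
      obtain ⟨y, hy, hEq⟩ := Finset.mem_image.1 h
      have : y = σ x := by
        have := congrArg σ hEq
        rwa [hσσ y] at this
      rwa [← this]
    · intro h
      exact Finset.mem_image.2 ⟨σ x, h, hσσ x⟩
  have hσrange : ∀ y : ℕ, y ∈ Finset.range (n + 1) → σ y ∈ Finset.range (n + 1) := by
    intro y hy
    rw [Finset.mem_range] at hy ⊢
    rcases eq_or_ne y e with rfl | hye
    · rw [hσdef, Equiv.swap_apply_left]; omega
    · rcases eq_or_ne y n with rfl | hyn
      · rw [hσdef, Equiv.swap_apply_right]; omega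
      · rw [hσdef, Equiv.swap_apply_of_ne_of_ne hye hyn]; omega
  have hUCG : UnionClosed G := by
    rintro A hA B hB
    obtain ⟨S, hS, rfl⟩ := Finset.mem_image.1 hA
    obtain ⟨S', hS', rfl⟩ := Finset.mem_image.1 hB
    rw [← Finset.image_union]
    exact Finset.mem_image_of_mem _ (hUC S hS S' hS')
  have hFamG : FamilyOn (n + 1) G := by
    rintro A hA
    obtain ⟨S, hS, rfl⟩ := Finset.mem_image.1 hA
    intro x hx
    rw [hmem_image_iff] at hx
    have h1 : σ x ∈ Finset.range (n + 1) := hFam S hS hx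
    have := hσrange (σ x) h1
    rwa [hσσ x] at this
  have hdegG : ∀ x ∈ Finset.range (n + 1), degOf G x ≤ a := by
    intro x hx
    have hfx : G.filter (fun A => x ∈ A) =
        (F.filter (fun S => σ x ∈ S)).image (fun S => S.image σ) := by
      ext A
      simp only [Finset.mem_filter, Finset.mem_image, hGdef]
      constructor
      · rintro ⟨⟨S, hS, rfl⟩, hxA⟩
        rw [hmem_image_iff] at hxA
        exact ⟨S, ⟨hS, hxA⟩, rfl⟩
      · rintro ⟨S, ⟨hS, hσxS⟩, rfl⟩
        exact ⟨⟨S, hS, rfl⟩, (hmem_image_iff S x).2 hσxS⟩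
    rw [degOf, hfx, Finset.card_image_of_injective _ himg_inj]
    exact hdeg (σ x) (hσrange x hx)
  have htG : twinCount G n ≤ 1 := by
    have himgins : ∀ S : Finset ℕ, insert n (S.image σ) = (insert e S).image σ := by
      intro S
      rw [Finset.image_insert]
      congr 1
      rw [hσdef, Equiv.swap_apply_left]
    have hWeq : G.filter (fun A => n ∉ A ∧ insert n A ∈ G) =
        (F.filter (fun S => e ∉ S ∧ insert e S ∈ F)).image (fun S => S.image σ) := by
      ext A
      constructor
      · intro hA
        have h1 := Finset.mem_filter.1 hA
        obtain ⟨S, hS, rfl⟩ := Finset.mem_image.1 h1.1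
        refine Finset.mem_image.2 ⟨S, Finset.mem_filter.2 ⟨hS, ?_, ?_⟩, rfl⟩
        · intro heS
          apply h1.2.1
          rw [hmem_image_iff]
          rwa [hσdef, Equiv.swap_apply_right]
        · have h2 := h1.2.2
          rw [himgins S] at h2
          exact (hmemG (insert e S)).2 h2
      · intro hA
        obtain ⟨S, hSf, rfl⟩ := Finset.mem_image.1 hA
        have h1 := Finset.mem_filter.1 hSf
        refine Finset.mem_filter.2 ⟨Finset.mem_image_of_mem _ h1.1, ?_, ?_⟩
        · intro hnA
          rw [hmem_image_iff, hσdef, Equiv.swap_apply_right] at hnA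
          exact h1.2.1 hnA
        · rw [himgins S]
          exact (hmemG (insert e S)).1 h1.2.2
    rw [twinCount, hWeq, Finset.card_image_of_injective _ himg_inj]
    exact ht
  have hbigG : franklF n a < G.card := by
    rw [hGcard, hopt]
    exact hlt
  exact main_twin_lemma a n ha hn hlog G hUCG hFamG hdegG hbigG htG
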